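/- Let ε₀, ε₁ > 0, let m₁, n₁, m₂, n₂ be integers, and let g₁, g₂ : ℂ × ℂ → ℂ be holomorphic (complex differentiable) and nonvanishing on an open neighborhood of the closed polydisc {(x,y) : |x| ≤ ε₀, |y| ≤ ε₁}. Write ∂ₓ and ∂_y for the complex partial derivatives. Then the iterated circle integral ∮_{|x|=ε₀} ( ∮_{|y|=ε₁} [ (m₁/x + ∂ₓg₁(x,y)/g₁(x,y))·(n₂/y + ∂_y g₂(x,y)/g₂(x,y)) − (n₁/y + ∂_y g₁(x,y)/g₁(x,y))·(m₂/x + ∂ₓg₂(x,y)/g₂(x,y)) ] dy ) dx = (2πi)²·(m₁n₂ − m₂n₁). -/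

import Mathlib

open Complex

open Complex Metric Set Filter MeasureTheory intervalIntegral

lemma sliceX_diffAt {g : ℂ × ℂ → ℂ} {x y : ℂ} (h : DifferentiableAt ℂ g (x, y)) :
    DifferentiableAt ℂ (fun z => g (z, y)) x :=
  h.comp x (differentiableAt_fun_id.prodMk (differentiableAt_const y))

lemma sliceY_diffAt {g : ℂ × ℂ → ℂ} {x y : ℂ} (h : DifferentiableAt ℂ g (x, y)) :
    DifferentiableAt ℂ (fun w => g (x, w)) y :=
  h.comp y ((differentiableAt_const x).prodMk differentiableAt_fun_id)

lemma deriv_slice_diffAt {R₀ R₁ : ℝ} {g : ℂ × ℂ → ℂ}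
    (hg : ∀ p ∈ closedBall (0:ℂ) R₀ ×ˢ closedBall (0:ℂ) R₁, DifferentiableAt ℂ g p)
    {x₀ y₀ : ℂ} (hx₀ : ‖x₀‖ < R₀) (hy₀ : ‖y₀‖ < R₁) :
    DifferentiableAt ℂ (fun y => deriv (fun z => g (z, y)) x₀) y₀ := by
  have hR₀ : 0 < R₀ := lt_of_le_of_lt (norm_nonneg x₀) hx₀
  have hR₁ : 0 < R₁ := lt_of_le_of_lt (norm_nonneg y₀) hy₀
  obtain ⟨r, hr, hrlt⟩ : ∃ r : ℝ, 0 < r ∧ ‖x₀‖ + r < R₀ :=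
    ⟨(R₀ - ‖x₀‖) / 2, by linarith, by linarith⟩
  obtain ⟨ρ, hρ, hρlt⟩ : ∃ ρ : ℝ, 0 < ρ ∧ ‖y₀‖ + 2 * ρ < R₁ :=
    ⟨(R₁ - ‖y₀‖) / 4, by linarith, by linarith⟩
  have hball_x : closedBall x₀ r ⊆ ball (0:ℂ) R₀ := fun w hw => by
    simp only [mem_closedBall, mem_ball, dist_zero_right] at *
    have h1 : ‖w - x₀‖ ≤ r := by rw [← dist_eq_norm]; exact hw
    have h2 : ‖w‖ ≤ ‖w - x₀‖ + ‖x₀‖ := by simpa using norm_add_le (w - x₀) x₀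
    linarith
  have hz_mem : ∀ θ : ℝ, circleMap x₀ r θ ∈ closedBall (0:ℂ) R₀ :=
    fun θ => ball_subset_closedBall (hball_x (circleMap_mem_closedBall x₀ hr.le θ))
  have hKcomp : IsCompact (closedBall (0:ℂ) R₀ ×ˢ closedBall (0:ℂ) R₁) :=
    (isCompact_closedBall _ _).prod (isCompact_closedBall _ _)
  have hgc : ContinuousOn g (closedBall (0:ℂ) R₀ ×ˢ closedBall (0:ℂ) R₁) :=
    fun p hp => (hg p hp).continuousAt.continuousWithinAt
  obtain ⟨M, hM⟩ := hKcomp.exists_bound_of_continuousOn hgc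
  have hM0 : 0 ≤ M := le_trans (norm_nonneg _)
    (hM (0, 0) ⟨by simp [mem_closedBall, hR₀.le], by simp [mem_closedBall, hR₁.le]⟩)
  have hbally : ∀ y ∈ ball y₀ ρ, closedBall y ρ ⊆ ball (0:ℂ) R₁ := by
    intro y hy w hw
    simp only [mem_closedBall, mem_ball, dist_zero_right] at *
    have h1 : ‖w - y‖ ≤ ρ := by rw [← dist_eq_norm]; exact hw
    have h2 : ‖y - y₀‖ < ρ := by rw [← dist_eq_norm]; exact hy
    have h3 : ‖w‖ ≤ ‖w - y‖ + ‖y‖ := by simpa using norm_add_le (w - y) y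
    have h4 : ‖y‖ ≤ ‖y - y₀‖ + ‖y₀‖ := by simpa using norm_add_le (y - y₀) y₀
    linarith
  have hbally' : ball y₀ ρ ⊆ ball (0:ℂ) R₁ := fun y hy =>
    hbally y hy (mem_closedBall_self hρ.le)
  set G : ℝ → ℂ := fun θ => deriv (circleMap x₀ r) θ * ((circleMap x₀ r θ - x₀) ^ 2)⁻¹ with hG_def
  have hGcont : Continuous G := by
    simp only [hG_def, deriv_circleMap, circleMap_sub_center]
    exact ((continuous_circleMap 0 r).mul continuous_const).mul
      (((continuous_circleMap 0 r).pow 2).inv₀ fun θ =>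
        pow_ne_zero _ (circleMap_ne_center hr.ne'))
  set F : ℂ → ℝ → ℂ := fun y θ => G θ * g (circleMap x₀ r θ, y) with hF_def
  have hcont_gθ : ∀ y ∈ closedBall (0:ℂ) R₁, Continuous fun θ => g (circleMap x₀ r θ, y) := by
    intro y hy
    exact hgc.comp_continuous
      ((continuous_circleMap x₀ r).prodMk continuous_const)
      (fun θ => ⟨hz_mem θ, hy⟩)
  have hFcont : ∀ y ∈ closedBall (0:ℂ) R₁, Continuous (F y) :=
    fun y hy => hGcont.mul (hcont_gθ y hy)
  have hF_repr : ∀ y ∈ ball (0:ℂ) R₁,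
      deriv (fun z => g (z, y)) x₀ =
        (2 * Real.pi * I : ℂ)⁻¹ * ∫ θ in (0:ℝ)..(2 * Real.pi), F y θ := by
    intro y hy
    have hdslice : DifferentiableOn ℂ (fun z => g (z, y)) (ball (0:ℂ) R₀) := fun z hz =>
      (sliceX_diffAt (hg (z, y)
        ⟨ball_subset_closedBall hz, ball_subset_closedBall hy⟩)).differentiableWithinAt
    rw [← two_pi_I_inv_smul_circleIntegral_sub_sq_inv_smul_of_differentiable isOpen_ball
      hball_x hdslice (mem_ball_self hr)]
    rw [smul_eq_mul]
    congr 1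
    show (∫ θ in (0:ℝ)..(2 * Real.pi),
        deriv (circleMap x₀ r) θ • ((circleMap x₀ r θ - x₀) ^ 2)⁻¹ • g (circleMap x₀ r θ, y)) = _
    refine intervalIntegral.integral_congr fun θ _ => ?_
    simp only [smul_eq_mul, hF_def, hG_def]
    ring
  have hvOn : ∀ θ : ℝ, DifferentiableOn ℂ (fun w => g (circleMap x₀ r θ, w)) (ball (0:ℂ) R₁) :=
    fun θ w hw => (sliceY_diffAt (hg (circleMap x₀ r θ, w)
      ⟨hz_mem θ, ball_subset_closedBall hw⟩)).differentiableWithinAt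
  -- sequence for measurability of F'
  set u : ℕ → ℂ := fun n => (ρ : ℂ) / (n + 1) with hu_def
  have hn1 : ∀ n : ℕ, ((n : ℂ) + 1) ≠ 0 := fun n => by
    have : ((n + 1 : ℕ) : ℂ) ≠ 0 := Nat.cast_ne_zero.mpr (Nat.succ_ne_zero n)
    push_cast at this; exact this
  have hu_ne : ∀ n, u n ≠ 0 := fun n =>
    div_ne_zero (by exact_mod_cast hρ.ne') (hn1 n)
  have hu_norm : ∀ n, ‖u n‖ ≤ ρ := by
    intro n
    simp only [hu_def, norm_div]
    rw [Complex.norm_real, Real.norm_eq_abs, _root_.abs_of_nonneg hρ.le]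
    have h1 : (1:ℝ) ≤ ‖((n:ℂ) + 1)‖ := by
      have h2 : ((n:ℂ) + 1) = ((n + 1 : ℕ) : ℂ) := by push_cast; ring
      rw [h2, Complex.norm_natCast]
      exact_mod_cast Nat.one_le_iff_ne_zero.mpr (Nat.succ_ne_zero n)
    calc ρ / ‖((n:ℂ) + 1)‖ ≤ ρ / 1 := div_le_div_of_nonneg_left hρ.le one_pos h1
      _ = ρ := div_one ρ
  have hu_tendsto : Tendsto u atTop (nhds 0) := by
    have h1 : Tendsto (fun n : ℕ => (ρ / ((n:ℝ) + 1) : ℝ)) atTop (nhds 0) := by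
      have h := (tendsto_const_div_atTop_nhds_zero_nat ρ).comp (tendsto_add_atTop_nat 1)
      have he : (fun n : ℕ => (ρ / ((n:ℝ) + 1) : ℝ))
          = (fun n : ℕ => ρ / (n:ℝ)) ∘ (fun a : ℕ => a + 1) := by
        funext n; simp only [Function.comp_apply]; push_cast; ring
      rw [he]; exact h
    have h2 := (Complex.continuous_ofReal.tendsto 0).comp h1
    have h3 : u = fun n : ℕ => ((ρ / ((n:ℝ) + 1) : ℝ) : ℂ) := by
      funext n; simp only [hu_def]; push_cast; ring
    have h4 : Tendsto (fun n : ℕ => ((ρ / ((n:ℝ) + 1) : ℝ) : ℂ)) atTop (nhds 0) := by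
      simpa [Function.comp_def] using h2
    exact h3 ▸ h4
  have hyu_mem : ∀ n, y₀ + u n ∈ closedBall (0:ℂ) R₁ := by
    intro n
    simp only [mem_closedBall, dist_zero_right]
    calc ‖y₀ + u n‖ ≤ ‖y₀‖ + ‖u n‖ := norm_add_le _ _
      _ ≤ ‖y₀‖ + ρ := by linarith [hu_norm n]
      _ ≤ R₁ := by linarith
  have hseq : Tendsto (fun n => y₀ + u n) atTop (nhdsWithin y₀ {y₀}ᶜ) := by
    apply tendsto_nhdsWithin_of_tendsto_nhds_of_eventually_within
    · simpa using tendsto_const_nhds.add hu_tendsto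
    · exact Eventually.of_forall fun n => by
        simp only [mem_compl_iff, mem_singleton_iff]
        exact fun h => hu_ne n (add_eq_left.mp h)
  have hy₀cb : y₀ ∈ closedBall (0:ℂ) R₁ := by
    simp only [mem_closedBall, dist_zero_right]; exact hy₀.le
  have key := intervalIntegral.hasDerivAt_integral_of_dominated_loc_of_lip
    (F := F) (F' := fun θ => G θ * deriv (fun w => g (circleMap x₀ r θ, w)) y₀)
    (x₀ := y₀) (a := 0) (b := 2 * Real.pi) (μ := MeasureTheory.volume)
    (bound := fun θ => ‖G θ‖ * (M / ρ)) (s := ball y₀ ρ) (ball_mem_nhds y₀ hρ)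
    ?_ ?_ ?_ ?_ ?_ ?_
  · obtain ⟨-, hD⟩ := key
    have hdiff2 : DifferentiableAt ℂ
        (fun y => (2 * Real.pi * I : ℂ)⁻¹ * ∫ θ in (0:ℝ)..(2 * Real.pi), F y θ) y₀ :=
      hD.differentiableAt.const_mul _
    apply hdiff2.congr_of_eventuallyEq
    filter_upwards [ball_mem_nhds y₀ hρ] with y hy
    exact hF_repr y (hbally' hy)
  · filter_upwards [ball_mem_nhds y₀ hρ] with y hy
    exact (hFcont y (ball_subset_closedBall (hbally' hy))).aestronglyMeasurable
  · exact (hFcont y₀ hy₀cb).intervalIntegrable _ _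
  · -- measurability of F'
    refine aestronglyMeasurable_of_tendsto_ae (f := fun n θ =>
        G θ * ((g (circleMap x₀ r θ, y₀ + u n) - g (circleMap x₀ r θ, y₀)) / u n)) atTop
      (fun n => (hGcont.mul (((hcont_gθ _ (hyu_mem n)).sub (hcont_gθ _ hy₀cb)).div_const
        (u n))).aestronglyMeasurable) (MeasureTheory.ae_of_all _ fun θ => ?_)
    have hv : HasDerivAt (fun w => g (circleMap x₀ r θ, w))
        (deriv (fun w => g (circleMap x₀ r θ, w)) y₀) y₀ :=
      (sliceY_diffAt (hg (circleMap x₀ r θ, y₀) ⟨hz_mem θ, hy₀cb⟩)).hasDerivAt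
    rw [hasDerivAt_iff_tendsto_slope] at hv
    have h1 : Tendsto (fun n => slope (fun w => g (circleMap x₀ r θ, w)) y₀ (y₀ + u n))
        atTop (nhds (deriv (fun w => g (circleMap x₀ r θ, w)) y₀)) := hv.comp hseq
    have h2 := h1.const_mul (G θ)
    refine h2.congr fun n => ?_
    simp only [slope_def_field, add_sub_cancel_left]
  · refine MeasureTheory.ae_of_all _ fun θ _ => ?_
    have hvdiff : ∀ y ∈ ball y₀ ρ,
        DifferentiableAt ℂ (fun w => g (circleMap x₀ r θ, w)) y := fun y hy =>
      sliceY_diffAt (hg (circleMap x₀ r θ, y)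
        ⟨hz_mem θ, ball_subset_closedBall (hbally' hy)⟩)
    have hbound : ∀ y ∈ ball y₀ ρ,
        ‖deriv (fun w => g (circleMap x₀ r θ, w)) y‖₊ ≤ Real.toNNReal (M / ρ) := by
      intro y hy
      rw [← cderiv_eq_deriv isOpen_ball (hvOn θ) hρ (hbally y hy)]
      have h2 : ‖cderiv ρ (fun w => g (circleMap x₀ r θ, w)) y‖ ≤ M / ρ :=
        norm_cderiv_le hρ fun w hw => hM (circleMap x₀ r θ, w)
          ⟨hz_mem θ, ball_subset_closedBall (hbally y hy (sphere_subset_closedBall hw))⟩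
      exact (Real.le_toNNReal_iff_coe_le (div_nonneg hM0 hρ.le)).mpr h2
    have hvlip : LipschitzOnWith (Real.toNNReal (M / ρ))
        (fun w => g (circleMap x₀ r θ, w)) (ball y₀ ρ) :=
      Convex.lipschitzOnWith_of_nnnorm_deriv_le hvdiff hbound (convex_ball y₀ ρ)
    have hmul : LipschitzOnWith (‖G θ‖₊ * Real.toNNReal (M / ρ))
        ((fun a => G θ * a) ∘ fun w => g (circleMap x₀ r θ, w)) (ball y₀ ρ) :=
      LipschitzWith.comp_lipschitzOnWith
        (by exact lipschitzWith_smul (G θ)) hvlip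
    have heq : Real.nnabs (‖G θ‖ * (M / ρ)) = ‖G θ‖₊ * Real.toNNReal (M / ρ) := by
      apply NNReal.coe_injective
      push_cast
      rw [Real.coe_toNNReal _ (div_nonneg hM0 hρ.le),
        _root_.abs_of_nonneg (mul_nonneg (norm_nonneg _) (div_nonneg hM0 hρ.le))]
    rw [heq]
    exact hmul
  · exact (hGcont.norm.mul continuous_const).intervalIntegrable _ _
  · refine MeasureTheory.ae_of_all _ fun θ _ => ?_
    exact ((sliceY_diffAt (hg (circleMap x₀ r θ, y₀) ⟨hz_mem θ, hy₀cb⟩)).hasDerivAt).const_mul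
      (G θ)


lemma shrink_norm (z : ℂ) {ε : ℝ} (hε : 0 < ε) :
    ∃ z' : ℂ, ‖z'‖ ≤ ε ∧ dist z z' ≤ max (‖z‖ - ε) 0 := by
  by_cases h : ‖z‖ ≤ ε
  · exact ⟨z, h, by simp⟩
  · push_neg at h
    have hz : z ≠ 0 := by intro h0; rw [h0, norm_zero] at h; linarith
    have hnz : (0:ℝ) < ‖z‖ := norm_pos_iff.mpr hz
    refine ⟨(ε / ‖z‖ : ℝ) • z, ?_, ?_⟩
    · rw [norm_smul, Real.norm_eq_abs, _root_.abs_of_nonneg (show (0:ℝ) ≤ ε / ‖z‖ by positivity)]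
      rw [div_mul_cancel₀ _ hnz.ne']
    · have : z - (ε / ‖z‖ : ℝ) • z = ((1 - ε / ‖z‖ : ℝ)) • z := by
        rw [sub_smul, one_smul]
      rw [dist_eq_norm, this, norm_smul, Real.norm_eq_abs,
        _root_.abs_of_nonneg (show (0:ℝ) ≤ 1 - ε / ‖z‖ by rw [sub_nonneg]; exact (div_le_one hnz).mpr h.le)]
      rw [sub_mul, one_mul, div_mul_cancel₀ _ hnz.ne']
      exact le_max_left _ _

lemma exists_bigger_polydisc {ε₀ ε₁ : ℝ} (hε₀ : 0 < ε₀) (hε₁ : 0 < ε₁) {U : Set (ℂ × ℂ)}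
    (hU : IsOpen U) (hsub : closedBall (0:ℂ) ε₀ ×ˢ closedBall (0:ℂ) ε₁ ⊆ U) :
    ∃ R₀ R₁ : ℝ, ε₀ < R₀ ∧ ε₁ < R₁ ∧ closedBall (0:ℂ) R₀ ×ˢ closedBall (0:ℂ) R₁ ⊆ U := by
  have hK : IsCompact (closedBall (0:ℂ) ε₀ ×ˢ closedBall (0:ℂ) ε₁) :=
    (isCompact_closedBall _ _).prod (isCompact_closedBall _ _)
  obtain ⟨δ, hδ, hth⟩ := hK.exists_thickening_subset_open hU hsub
  refine ⟨ε₀ + δ/2, ε₁ + δ/2, by linarith, by linarith, fun p hp => ?_⟩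
  obtain ⟨hp1, hp2⟩ := hp
  simp only [mem_closedBall, dist_zero_right] at hp1 hp2
  obtain ⟨x', hx'1, hx'2⟩ := shrink_norm p.1 hε₀
  obtain ⟨y', hy'1, hy'2⟩ := shrink_norm p.2 hε₁
  apply hth
  rw [mem_thickening_iff]
  refine ⟨(x', y'), ⟨by simpa [mem_closedBall, dist_zero_right] using hx'1,
    by simpa [mem_closedBall, dist_zero_right] using hy'1⟩, ?_⟩
  rw [Prod.dist_eq]
  have h1 : dist p.1 x' ≤ δ/2 := hx'2.trans (by rw [max_le_iff]; constructor <;> linarith)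
  have h2 : dist p.2 y' ≤ δ/2 := hy'2.trans (by rw [max_le_iff]; constructor <;> linarith)
  calc dist p.1 x' ⊔ dist p.2 y' ≤ δ/2 := max_le h1 h2
    _ < δ := by linarith


lemma mem_cb {x : ℂ} {R : ℝ} (h : ‖x‖ ≤ R) : x ∈ closedBall (0:ℂ) R := by
  simpa [mem_closedBall, dist_zero_right] using h

lemma logDerivX_diffAt {R₀ R₁ : ℝ} {g : ℂ × ℂ → ℂ}
    (hg : ∀ p ∈ closedBall (0:ℂ) R₀ ×ˢ closedBall (0:ℂ) R₁, DifferentiableAt ℂ g p)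
    (hg0 : ∀ p ∈ closedBall (0:ℂ) R₀ ×ˢ closedBall (0:ℂ) R₁, g p ≠ 0)
    {x y₀ : ℂ} (hx : ‖x‖ < R₀) (hy₀ : ‖y₀‖ < R₁) :
    DifferentiableAt ℂ (fun y => deriv (fun z => g (z, y)) x / g (x, y)) y₀ :=
  (deriv_slice_diffAt hg hx hy₀).div
    (sliceY_diffAt (hg (x, y₀) ⟨mem_cb hx.le, mem_cb hy₀.le⟩))
    (hg0 (x, y₀) ⟨mem_cb hx.le, mem_cb hy₀.le⟩)

lemma logDerivY_diffAt {R₀ R₁ : ℝ} {g : ℂ × ℂ → ℂ}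
    (hg : ∀ p ∈ closedBall (0:ℂ) R₀ ×ˢ closedBall (0:ℂ) R₁, DifferentiableAt ℂ g p)
    (hg0 : ∀ p ∈ closedBall (0:ℂ) R₀ ×ˢ closedBall (0:ℂ) R₁, g p ≠ 0)
    {x y₀ : ℂ} (hx : ‖x‖ ≤ R₀) (hy₀ : ‖y₀‖ < R₁) :
    DifferentiableAt ℂ (fun y => deriv (fun w => g (x, w)) y / g (x, y)) y₀ := by
  have hvOn : DifferentiableOn ℂ (fun w => g (x, w)) (ball (0:ℂ) R₁) := fun w hw =>
    (sliceY_diffAt (hg (x, w) ⟨mem_cb hx, ball_subset_closedBall hw⟩)).differentiableWithinAt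
  have hy₀b : y₀ ∈ ball (0:ℂ) R₁ := by simpa [mem_ball, dist_zero_right] using hy₀
  exact (((hvOn.analyticOnNhd isOpen_ball).deriv y₀ hy₀b).differentiableAt).div
    (sliceY_diffAt (hg (x, y₀) ⟨mem_cb hx, mem_cb hy₀.le⟩))
    (hg0 (x, y₀) ⟨mem_cb hx, mem_cb hy₀.le⟩)

lemma logDerivX0_diffAt {R₀ R₁ : ℝ} {g : ℂ × ℂ → ℂ}
    (hg : ∀ p ∈ closedBall (0:ℂ) R₀ ×ˢ closedBall (0:ℂ) R₁, DifferentiableAt ℂ g p)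
    (hg0 : ∀ p ∈ closedBall (0:ℂ) R₀ ×ˢ closedBall (0:ℂ) R₁, g p ≠ 0)
    (hR₁ : 0 ≤ R₁) {x₀ : ℂ} (hx₀ : ‖x₀‖ < R₀) :
    DifferentiableAt ℂ (fun x => deriv (fun z => g (z, 0)) x / g (x, 0)) x₀ := by
  have hvOn : DifferentiableOn ℂ (fun z => g (z, 0)) (ball (0:ℂ) R₀) := fun z hz =>
    (sliceX_diffAt (hg (z, 0) ⟨ball_subset_closedBall hz, mem_cb (by simp [hR₁])⟩)).differentiableWithinAt
  have hx₀b : x₀ ∈ ball (0:ℂ) R₀ := by simpa [mem_ball, dist_zero_right] using hx₀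
  exact (((hvOn.analyticOnNhd isOpen_ball).deriv x₀ hx₀b).differentiableAt).div
    (sliceX_diffAt (hg (x₀, 0) ⟨mem_cb hx₀.le, mem_cb (by simp [hR₁])⟩))
    (hg0 (x₀, 0) ⟨mem_cb hx₀.le, mem_cb (by simp [hR₁])⟩)

lemma circleIntegral_add' {f g : ℂ → ℂ} {c : ℂ} {R : ℝ} (h1 : CircleIntegrable f c R)
    (h2 : CircleIntegrable g c R) :
    (∮ z in C(c, R), (f z + g z)) = (∮ z in C(c, R), f z) + ∮ z in C(c, R), g z := by
  simp only [circleIntegral, smul_add]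
  exact intervalIntegral.integral_add h1.out h2.out

set_option maxHeartbeats 2000000 in
/-- Lemma 3.2(a): for `fₖ(x,y) = x^{mₖ} y^{nₖ} gₖ(x,y)` with `gₖ` holomorphic
and nonvanishing near the closed polydisc, the integral of `df₁/f₁ ∧ df₂/f₂`
over the torus `{|x| = ε₀, |y| = ε₁}` equals `(2πi)²(m₁n₂ − m₂n₁)`. -/
theorem torus_integral_wedge_logDeriv
    (ε₀ ε₁ : ℝ) (hε₀ : 0 < ε₀) (hε₁ : 0 < ε₁)
    (m₁ n₁ m₂ n₂ : ℤ) (g₁ g₂ : ℂ × ℂ → ℂ) (U : Set (ℂ × ℂ)) (hU : IsOpen U)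
    (hsub : {p : ℂ × ℂ | ‖p.1‖ ≤ ε₀ ∧ ‖p.2‖ ≤ ε₁} ⊆ U)
    (hg₁ : DifferentiableOn ℂ g₁ U) (hg₂ : DifferentiableOn ℂ g₂ U)
    (hg₁0 : ∀ p ∈ U, g₁ p ≠ 0) (hg₂0 : ∀ p ∈ U, g₂ p ≠ 0) :
    (∮ x in C(0, ε₀), (∮ y in C(0, ε₁),
        (((m₁ : ℂ) / x + deriv (fun z => g₁ (z, y)) x / g₁ (x, y))
            * ((n₂ : ℂ) / y + deriv (fun z => g₂ (x, z)) y / g₂ (x, y))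
          - ((n₁ : ℂ) / y + deriv (fun z => g₁ (x, z)) y / g₁ (x, y))
            * ((m₂ : ℂ) / x + deriv (fun z => g₂ (z, y)) x / g₂ (x, y)))))
      = (2 * Real.pi * Complex.I) ^ (2 : ℕ) * ((m₁ * n₂ - m₂ * n₁ : ℤ) : ℂ) := by
  have hsub2 : closedBall (0:ℂ) ε₀ ×ˢ closedBall (0:ℂ) ε₁ ⊆ U := by
    intro p hp
    apply hsub
    obtain ⟨h1, h2⟩ := hp
    simp only [mem_closedBall, dist_zero_right] at h1 h2
    exact ⟨h1, h2⟩
  obtain ⟨R₀, R₁, hR₀, hR₁, hsubR⟩ := exists_bigger_polydisc hε₀ hε₁ hU hsub2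
  have hR₀0 : 0 < R₀ := lt_trans hε₀ hR₀
  have hR₁0 : 0 < R₁ := lt_trans hε₁ hR₁
  have hg₁' : ∀ p ∈ closedBall (0:ℂ) R₀ ×ˢ closedBall (0:ℂ) R₁, DifferentiableAt ℂ g₁ p :=
    fun p hp => hg₁.differentiableAt (hU.mem_nhds (hsubR hp))
  have hg₂' : ∀ p ∈ closedBall (0:ℂ) R₀ ×ˢ closedBall (0:ℂ) R₁, DifferentiableAt ℂ g₂ p :=
    fun p hp => hg₂.differentiableAt (hU.mem_nhds (hsubR hp))
  have hg₁0' : ∀ p ∈ closedBall (0:ℂ) R₀ ×ˢ closedBall (0:ℂ) R₁, g₁ p ≠ 0 :=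
    fun p hp => hg₁0 p (hsubR hp)
  have hg₂0' : ∀ p ∈ closedBall (0:ℂ) R₀ ×ˢ closedBall (0:ℂ) R₁, g₂ p ≠ 0 :=
    fun p hp => hg₂0 p (hsubR hp)
  set c : ℂ := ((m₁ * n₂ - m₂ * n₁ : ℤ) : ℂ) with hc_def
  set η : ℂ → ℂ := fun x =>
    (n₂ : ℂ) * (deriv (fun z => g₁ (z, 0)) x / g₁ (x, 0))
      - (n₁ : ℂ) * (deriv (fun z => g₂ (z, 0)) x / g₂ (x, 0)) with hη_def
  -- inner integral computation
  have hInner : ∀ x ∈ sphere (0:ℂ) ε₀,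
      (∮ y in C(0, ε₁),
        (((m₁ : ℂ) / x + deriv (fun z => g₁ (z, y)) x / g₁ (x, y))
            * ((n₂ : ℂ) / y + deriv (fun z => g₂ (x, z)) y / g₂ (x, y))
          - ((n₁ : ℂ) / y + deriv (fun z => g₁ (x, z)) y / g₁ (x, y))
            * ((m₂ : ℂ) / x + deriv (fun z => g₂ (z, y)) x / g₂ (x, y))))
      = (2 * Real.pi * I) * (c / x + η x) := by
    intro x hx
    have hxn : ‖x‖ = ε₀ := by simpa [mem_sphere_iff_norm] using hx
    have hx0 : x ≠ 0 := by
      intro h; rw [h, norm_zero] at hxn; linarith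
    have hxR : ‖x‖ < R₀ := by rw [hxn]; exact hR₀
    set A₁ : ℂ → ℂ := fun y => deriv (fun z => g₁ (z, y)) x / g₁ (x, y) with hA₁_def
    set A₂ : ℂ → ℂ := fun y => deriv (fun z => g₂ (z, y)) x / g₂ (x, y) with hA₂_def
    set B₁ : ℂ → ℂ := fun y => deriv (fun w => g₁ (x, w)) y / g₁ (x, y) with hB₁_def
    set B₂ : ℂ → ℂ := fun y => deriv (fun w => g₂ (x, w)) y / g₂ (x, y) with hB₂_def
    set φ : ℂ → ℂ := fun y => c / x + ((n₂ : ℂ) * A₁ y - (n₁ : ℂ) * A₂ y) with hφ_def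
    set ψ : ℂ → ℂ := fun y =>
      ((m₁ : ℂ) / x * B₂ y + A₁ y * B₂ y) - ((m₂ : ℂ) / x * B₁ y + B₁ y * A₂ y) with hψ_def
    have hA₁d : ∀ y₀ ∈ ball (0:ℂ) R₁, DifferentiableAt ℂ A₁ y₀ := fun y₀ hy₀ =>
      logDerivX_diffAt hg₁' hg₁0' hxR (by simpa [mem_ball, dist_zero_right] using hy₀)
    have hA₂d : ∀ y₀ ∈ ball (0:ℂ) R₁, DifferentiableAt ℂ A₂ y₀ := fun y₀ hy₀ =>
      logDerivX_diffAt hg₂' hg₂0' hxR (by simpa [mem_ball, dist_zero_right] using hy₀)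
    have hB₁d : ∀ y₀ ∈ ball (0:ℂ) R₁, DifferentiableAt ℂ B₁ y₀ := fun y₀ hy₀ =>
      logDerivY_diffAt hg₁' hg₁0' hxR.le (by simpa [mem_ball, dist_zero_right] using hy₀)
    have hB₂d : ∀ y₀ ∈ ball (0:ℂ) R₁, DifferentiableAt ℂ B₂ y₀ := fun y₀ hy₀ =>
      logDerivY_diffAt hg₂' hg₂0' hxR.le (by simpa [mem_ball, dist_zero_right] using hy₀)
    have hφd : ∀ y₀ ∈ ball (0:ℂ) R₁, DifferentiableAt ℂ φ y₀ := fun y₀ hy₀ =>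
      (differentiableAt_const _).add
        (((hA₁d y₀ hy₀).const_mul _).sub ((hA₂d y₀ hy₀).const_mul _))
    have hψd : ∀ y₀ ∈ ball (0:ℂ) R₁, DifferentiableAt ℂ ψ y₀ := fun y₀ hy₀ =>
      (((hB₂d y₀ hy₀).const_mul _).add ((hA₁d y₀ hy₀).mul (hB₂d y₀ hy₀))).sub
        (((hB₁d y₀ hy₀).const_mul _).add ((hB₁d y₀ hy₀).mul (hA₂d y₀ hy₀)))
    have hsubball : closedBall (0:ℂ) ε₁ ⊆ ball (0:ℂ) R₁ :=
      closedBall_subset_ball hR₁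
    have hφc : ContinuousOn φ (closedBall (0:ℂ) ε₁) := fun y hy =>
      (hφd y (hsubball hy)).continuousAt.continuousWithinAt
    have hψc : ContinuousOn ψ (closedBall (0:ℂ) ε₁) := fun y hy =>
      (hψd y (hsubball hy)).continuousAt.continuousWithinAt
    have h1 : (∮ y in C(0, ε₁), (y - 0)⁻¹ • φ y) = (2 * Real.pi * I : ℂ) • φ 0 :=
      circleIntegral_sub_inv_smul_of_differentiable_on_off_countable countable_empty
        (mem_ball_self hε₁) hφc
        (fun y hy => hφd y (hsubball (ball_subset_closedBall hy.1)))
    have h2 : (∮ y in C(0, ε₁), ψ y) = 0 :=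
      circleIntegral_eq_zero_of_differentiable_on_off_countable hε₁.le countable_empty hψc
        (fun y hy => hψd y (hsubball (ball_subset_closedBall hy.1)))
    have hint1 : CircleIntegrable (fun y => (y - 0)⁻¹ • φ y) 0 ε₁ := by
      apply ContinuousOn.circleIntegrable hε₁.le
      refine ContinuousOn.smul (ContinuousOn.inv₀ (f := fun y : ℂ => y - 0) (by fun_prop) ?_)
        (hφc.mono sphere_subset_closedBall)
      intro y hy
      have : ‖y‖ = ε₁ := by simpa [mem_sphere_iff_norm] using hy
      intro h0
      rw [sub_zero] at h0
      rw [h0, norm_zero] at this; linarith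
    have hint2 : CircleIntegrable ψ 0 ε₁ :=
      ContinuousOn.circleIntegrable hε₁.le (hψc.mono sphere_subset_closedBall)
    have hcongr : (∮ y in C(0, ε₁),
        (((m₁ : ℂ) / x + deriv (fun z => g₁ (z, y)) x / g₁ (x, y))
            * ((n₂ : ℂ) / y + deriv (fun z => g₂ (x, z)) y / g₂ (x, y))
          - ((n₁ : ℂ) / y + deriv (fun z => g₁ (x, z)) y / g₁ (x, y))
            * ((m₂ : ℂ) / x + deriv (fun z => g₂ (z, y)) x / g₂ (x, y))))
        = ∮ y in C(0, ε₁), ((y - 0)⁻¹ • φ y + ψ y) := by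
      refine circleIntegral.integral_congr hε₁.le fun y hy => ?_
      have hyn : ‖y‖ = ε₁ := by simpa [mem_sphere_iff_norm] using hy
      have hy0 : y ≠ 0 := by
        intro h; rw [h, norm_zero] at hyn; linarith
      have hymem : y ∈ closedBall (0:ℂ) R₁ := mem_cb (by rw [hyn]; linarith)
      have hxmem : x ∈ closedBall (0:ℂ) R₀ := mem_cb hxR.le
      have hG1 : g₁ (x, y) ≠ 0 := hg₁0' (x, y) ⟨hxmem, hymem⟩
      have hG2 : g₂ (x, y) ≠ 0 := hg₂0' (x, y) ⟨hxmem, hymem⟩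
      simp only [hφ_def, hψ_def, hA₁_def, hA₂_def, hB₁_def, hB₂_def, smul_eq_mul, sub_zero,
        hc_def]
      push_cast
      simp only [div_eq_mul_inv]
      ring
    rw [hcongr]
    rw [show (∮ y in C(0, ε₁), ((y - 0)⁻¹ • φ y + ψ y))
        = (∮ y in C(0, ε₁), (y - 0)⁻¹ • φ y) + ∮ y in C(0, ε₁), ψ y from
      circleIntegral_add' hint1 hint2, h1, h2, add_zero, smul_eq_mul]
  -- outer integral
  have hηd : ∀ x₀ ∈ ball (0:ℂ) R₀, DifferentiableAt ℂ η x₀ := fun x₀ hx₀ =>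
    ((logDerivX0_diffAt hg₁' hg₁0' hR₁0.le
        (by simpa [mem_ball, dist_zero_right] using hx₀)).const_mul _).sub
      ((logDerivX0_diffAt hg₂' hg₂0' hR₁0.le
        (by simpa [mem_ball, dist_zero_right] using hx₀)).const_mul _)
  have hsubball0 : closedBall (0:ℂ) ε₀ ⊆ ball (0:ℂ) R₀ := closedBall_subset_ball hR₀
  have hηc : ContinuousOn η (closedBall (0:ℂ) ε₀) := fun x hx =>
    (hηd x (hsubball0 hx)).continuousAt.continuousWithinAt
  have hO1 : (∮ x in C(0, ε₀), (x - 0)⁻¹ • c) = (2 * Real.pi * I : ℂ) • c :=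
    circleIntegral_sub_inv_smul_of_differentiable_on_off_countable countable_empty
      (mem_ball_self hε₀) continuousOn_const (fun _ _ => differentiableAt_const _)
  have hO2 : (∮ x in C(0, ε₀), η x) = 0 :=
    circleIntegral_eq_zero_of_differentiable_on_off_countable hε₀.le countable_empty hηc
      (fun x hx => hηd x (hsubball0 (ball_subset_closedBall hx.1)))
  have hOint1 : CircleIntegrable (fun x => (x - 0)⁻¹ • c) 0 ε₀ := by
    apply ContinuousOn.circleIntegrable hε₀.le
    refine ContinuousOn.smul (ContinuousOn.inv₀ (f := fun x : ℂ => x - 0) (by fun_prop) ?_) continuousOn_const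
    intro x hx
    have : ‖x‖ = ε₀ := by simpa [mem_sphere_iff_norm] using hx
    intro h0
    rw [sub_zero] at h0
    rw [h0, norm_zero] at this; linarith
  have hOint2 : CircleIntegrable η 0 ε₀ :=
    ContinuousOn.circleIntegrable hε₀.le (hηc.mono sphere_subset_closedBall)
  have hOcongr : (∮ x in C(0, ε₀), (∮ y in C(0, ε₁),
        (((m₁ : ℂ) / x + deriv (fun z => g₁ (z, y)) x / g₁ (x, y))
            * ((n₂ : ℂ) / y + deriv (fun z => g₂ (x, z)) y / g₂ (x, y))
          - ((n₁ : ℂ) / y + deriv (fun z => g₁ (x, z)) y / g₁ (x, y))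
            * ((m₂ : ℂ) / x + deriv (fun z => g₂ (z, y)) x / g₂ (x, y)))))
      = ∮ x in C(0, ε₀), (2 * Real.pi * I : ℂ) • ((x - 0)⁻¹ • c + η x) := by
    refine circleIntegral.integral_congr hε₀.le fun x hx => ?_
    rw [hInner x hx]
    have hxn : ‖x‖ = ε₀ := by simpa [mem_sphere_iff_norm] using hx
    have hx0 : x ≠ 0 := by intro h; rw [h, norm_zero] at hxn; linarith
    simp only [smul_eq_mul, sub_zero]
    rw [div_eq_inv_mul]
  rw [hOcongr, circleIntegral.integral_smul]
  rw [show (∮ x in C(0, ε₀), ((x - 0)⁻¹ • c + η x))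
      = (∮ x in C(0, ε₀), (x - 0)⁻¹ • c) + ∮ x in C(0, ε₀), η x from
    circleIntegral_add' hOint1 hOint2, hO1, hO2, add_zero]
  simp only [smul_eq_mul]
  ring
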